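/- Let F : [0,1]² → [0,1] be a measurable function and ξ a real number. If ∫₀¹ F(x,z)·F(y,z) dz = ξ for almost every pair (x,y) ∈ [0,1]², then ∫₀¹ F(x,z)² dz = ξ for almost every x ∈ [0,1]. -/

import Mathlib

open MeasureTheory Set

/-- If `A ×ˢ A` is contained in a measurable null set of the product measure,
then `A` is null. -/
lemma sq_null {μ : Measure ℝ} [SFinite μ] {N : Set (ℝ × ℝ)} (hN : MeasurableSet N)
    (h0 : μ.prod μ N = 0) {A : Set ℝ} (hA : A ×ˢ A ⊆ N) : μ A = 0 := by
  have hsec : ∀ᵐ x ∂μ, μ (Prod.mk x ⁻¹' N) = 0 :=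
    (Measure.measure_prod_null hN).mp h0
  by_contra hpos
  have hE : μ {x | μ (Prod.mk x ⁻¹' N) ≠ 0} = 0 := by
    simpa [ae_iff] using hsec
  have hex : ∃ x ∈ A, μ (Prod.mk x ⁻¹' N) = 0 := by
    by_contra hc
    push_neg at hc
    exact hpos (measure_mono_null (fun x hx => hc x hx) hE)
  obtain ⟨x, hxA, hx0⟩ := hex
  exact hpos (measure_mono_null (fun y hy => hA (Set.mk_mem_prod hxA hy)) hx0)

theorem stmt0 (F : ℝ → ℝ → ℝ) (ξ : ℝ)
    (hF : Measurable (fun p : ℝ × ℝ => F p.1 p.2))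
    (hrange : ∀ x y, F x y ∈ Set.Icc (0:ℝ) 1)
    (h : ∀ᵐ p ∂(volume.restrict ((Set.Icc (0:ℝ) 1) ×ˢ (Set.Icc (0:ℝ) 1))),
      ∫ z in Set.Icc (0:ℝ) 1, F p.1 z * F p.2 z = ξ) :
    ∀ᵐ x ∂(volume.restrict (Set.Icc (0:ℝ) 1)),
      ∫ z in Set.Icc (0:ℝ) 1, (F x z)^2 = ξ := by
  have measF : ∀ x, Measurable (F x) := fun x => hF.comp measurable_prodMk_left
  set μ1 : Measure ℝ := volume.restrict (Set.Icc (0:ℝ) 1) with hμ1def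
  haveI : IsFiniteMeasure μ1 := by
    constructor
    rw [hμ1def, Measure.restrict_apply_univ]
    exact measure_Icc_lt_top
  have hint : ∀ f : ℝ → ℝ, Measurable f → (∀ z, |f z| ≤ 1) → Integrable f μ1 := by
    intro f hf hb
    exact (integrable_const (1:ℝ)).mono' hf.aestronglyMeasurable
      (Filter.Eventually.of_forall (by simpa using hb))
  have habs : ∀ x z, |F x z| ≤ 1 := by
    intro x z
    rw [abs_le]
    exact ⟨by linarith [(hrange x z).1], (hrange x z).2⟩
  set g : ℝ → ℝ := fun x => ∫ z in Set.Icc (0:ℝ) 1, (F x z)^2 with hgdef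
  set K : ℝ → ℝ → ℝ := fun x y => ∫ z in Set.Icc (0:ℝ) 1, F x z * F y z with hKdef
  -- integrability facts
  have isq : ∀ x, Integrable (fun z => (F x z)^2) μ1 := fun x =>
    hint _ ((measF x).pow_const 2) (fun z => by
      rw [abs_pow, sq_abs]
      nlinarith [habs x z, abs_nonneg (F x z), (hrange x z).1, (hrange x z).2])
  have imul : ∀ x y, Integrable (fun z => F x z * F y z) μ1 := fun x y =>
    hint _ ((measF x).mul (measF y)) (fun z => by
      rw [abs_mul]
      calc |F x z| * |F y z| ≤ 1 * 1 := by
            exact mul_le_mul (habs x z) (habs y z) (abs_nonneg _) zero_le_one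
        _ = 1 := by ring)
  have idiffsq : ∀ x y, Integrable (fun z => (F x z - F y z)^2) μ1 := fun x y =>
    hint _ (((measF x).sub (measF y)).pow_const 2) (fun z => by
      rw [abs_pow, sq_abs]
      nlinarith [(hrange x z).1, (hrange x z).2, (hrange y z).1, (hrange y z).2])
  have idiffabs : ∀ x y, Integrable (fun z => |F x z - F y z|) μ1 := fun x y =>
    hint _ ((measF x).sub (measF y)).abs (fun z => by
      rw [abs_abs, abs_le]
      constructor <;> nlinarith [(hrange x z).1, (hrange x z).2, (hrange y z).1, (hrange y z).2])
  -- key identity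
  have hD : ∀ x y, ∫ z in Set.Icc (0:ℝ) 1, (F x z - F y z)^2 = g x + g y - 2 * K x y := by
    intro x y
    have iadd : Integrable (fun z => F x z ^ 2 + F y z ^ 2) μ1 := (isq x).add (isq y)
    have imul2 : Integrable (fun z => 2 * (F x z * F y z)) μ1 := (imul x y).const_mul 2
    have hptw : ∫ z in Set.Icc (0:ℝ) 1, (F x z - F y z)^2
        = ∫ z in Set.Icc (0:ℝ) 1, (F x z ^ 2 + F y z ^ 2 - 2 * (F x z * F y z)) := by
      apply integral_congr_ae
      filter_upwards with z
      ring
    rw [hptw, integral_sub iadd imul2, integral_add (isq x) (isq y), integral_const_mul]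
  have hgK : ∀ x y, 2 * K x y ≤ g x + g y := by
    intro x y
    have h0 : 0 ≤ ∫ z in Set.Icc (0:ℝ) 1, (F x z - F y z)^2 :=
      integral_nonneg fun z => sq_nonneg _
    linarith [hD x y]
  -- measurability of g and K
  have measg : Measurable g := by
    have hm : StronglyMeasurable fun q : ℝ × ℝ => (F q.1 q.2)^2 :=
      (hF.pow_const 2).stronglyMeasurable
    exact hm.integral_prod_right'.measurable
  have measK : Measurable fun p : ℝ × ℝ => K p.1 p.2 := by
    have hm : StronglyMeasurable fun q : (ℝ × ℝ) × ℝ => F q.1.1 q.2 * F q.1.2 q.2 := by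
      apply Measurable.stronglyMeasurable
      exact (hF.comp ((measurable_fst.fst).prodMk measurable_snd)).mul
        (hF.comp ((measurable_fst.snd).prodMk measurable_snd))
    exact hm.integral_prod_right'.measurable
  -- the a.e. hypothesis, over the product of restricted measures
  have hKae : ∀ᵐ p ∂(μ1.prod μ1), K p.1 p.2 = ξ := by
    rw [hμ1def, Measure.prod_restrict, ← Measure.volume_eq_prod]
    exact h
  have hNnull : (μ1.prod μ1) {p : ℝ × ℝ | ¬ K p.1 p.2 = ξ} = 0 := ae_iff.mp hKae
  have hNmeas : MeasurableSet {p : ℝ × ℝ | ¬ K p.1 p.2 = ξ} :=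
    (measK (measurableSet_singleton ξ)).compl
  -- Step 1: {g < ξ} is null
  have hlow : μ1 {x | g x < ξ} = 0 := by
    have hN'null : (μ1.prod μ1) {p : ℝ × ℝ | g p.1 + g p.2 < 2 * ξ} = 0 := by
      have hae : ∀ᵐ p ∂(μ1.prod μ1), ¬ (g p.1 + g p.2 < 2 * ξ) := by
        filter_upwards [hKae] with p hp
        rw [not_lt, ← hp]
        exact hgK _ _
      simpa [ae_iff] using hae
    have hN'meas : MeasurableSet {p : ℝ × ℝ | g p.1 + g p.2 < 2 * ξ} :=
      measurableSet_lt ((measg.comp measurable_fst).add (measg.comp measurable_snd))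
        measurable_const
    apply sq_null hN'meas hN'null
    rintro ⟨x, y⟩ ⟨hx, hy⟩
    simp only [Set.mem_setOf_eq] at *
    linarith
  -- Step 2: for each c > 0, {ξ + c ≤ g} is null
  have hup : ∀ c : ℝ, 0 < c → μ1 {x | ξ + c ≤ g x} = 0 := by
    intro c hc
    by_contra hBpos
    haveI : Fact ((1:ENNReal) ≤ 1) := ⟨le_rfl⟩
    haveI : Fact ((1:ENNReal) ≠ ⊤) := ⟨by simp⟩
    have memF : ∀ x, MemLp (F x) 1 μ1 := fun x =>
      memLp_one_iff_integrable.mpr (hint _ (measF x) (habs x))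
    set Φ : ℝ → Lp ℝ 1 μ1 := fun x => (memF x).toLp (F x) with hΦdef
    haveI : SecondCountableTopology (Lp ℝ 1 μ1) := MeasureTheory.Lp.SecondCountableTopology
    obtain ⟨u, hu_count, hu_dense⟩ := TopologicalSpace.exists_countable_dense (Lp ℝ 1 μ1)
    have hcover : {x | ξ + c ≤ g x}
        ⊆ ⋃ d ∈ u, ({x | ξ + c ≤ g x} ∩ Φ ⁻¹' (Metric.ball d (c/4))) := by
      intro x hx
      obtain ⟨d, hd⟩ := Metric.dense_iff.mp hu_dense (Φ x) (c/4) (by positivity)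
      exact Set.mem_biUnion hd.2 ⟨hx, by
        simpa [Metric.mem_ball, dist_comm] using hd.1⟩
    have hpiece : ∃ d ∈ u, μ1 ({x | ξ + c ≤ g x} ∩ Φ ⁻¹' (Metric.ball d (c/4))) ≠ 0 := by
      by_contra hall
      push_neg at hall
      exact hBpos (measure_mono_null hcover
        ((measure_biUnion_null_iff hu_count).mpr hall))
    obtain ⟨d, hdu, hApos⟩ := hpiece
    set A := {x | ξ + c ≤ g x} ∩ Φ ⁻¹' (Metric.ball d (c/4)) with hAdef
    have hnotsub : ¬ (A ×ˢ A ⊆ {p : ℝ × ℝ | ¬ K p.1 p.2 = ξ}) :=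
      fun hsub => hApos (sq_null hNmeas hNnull hsub)
    obtain ⟨p, hpA, hpK⟩ := Set.not_subset.mp hnotsub
    have hKp : K p.1 p.2 = ξ := not_not.mp hpK
    obtain ⟨hx, hy⟩ := hpA
    -- lower bound on the square distance
    have h1 : 2 * c ≤ ∫ z in Set.Icc (0:ℝ) 1, (F p.1 z - F p.2 z)^2 := by
      rw [hD, hKp]
      have hx1 : ξ + c ≤ g p.1 := hx.1
      have hy1 : ξ + c ≤ g p.2 := hy.1
      linarith
    -- upper bound
    have h2 : ∫ z in Set.Icc (0:ℝ) 1, (F p.1 z - F p.2 z)^2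
        ≤ ∫ z in Set.Icc (0:ℝ) 1, |F p.1 z - F p.2 z| := by
      apply integral_mono (idiffsq p.1 p.2) (idiffabs p.1 p.2)
      intro z
      have hle : |F p.1 z - F p.2 z| ≤ 1 := by
        rw [abs_le]
        constructor <;>
          nlinarith [(hrange p.1 z).1, (hrange p.1 z).2, (hrange p.2 z).1, (hrange p.2 z).2]
      calc (F p.1 z - F p.2 z)^2 = |F p.1 z - F p.2 z| * |F p.1 z - F p.2 z| := by
            rw [abs_mul_abs_self]; ring
        _ ≤ |F p.1 z - F p.2 z| * 1 := by
            exact mul_le_mul_of_nonneg_left hle (abs_nonneg _)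
        _ = |F p.1 z - F p.2 z| := by ring
    have h3 : ∫ z in Set.Icc (0:ℝ) 1, |F p.1 z - F p.2 z| = ‖Φ p.1 - Φ p.2‖ := by
      rw [L1.norm_eq_integral_norm]
      apply integral_congr_ae
      filter_upwards [Lp.coeFn_sub (Φ p.1) (Φ p.2), (memF p.1).coeFn_toLp,
        (memF p.2).coeFn_toLp] with z hz1 hz2 hz3
      simp only [hΦdef] at hz1
      rw [Real.norm_eq_abs, hz1, Pi.sub_apply, hz2, hz3]
    have h4 : ‖Φ p.1 - Φ p.2‖ < c / 2 := by
      have hd1 : dist (Φ p.1) d < c/4 := Metric.mem_ball.mp hx.2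
      have hd2 : dist (Φ p.2) d < c/4 := Metric.mem_ball.mp hy.2
      calc ‖Φ p.1 - Φ p.2‖ = dist (Φ p.1) (Φ p.2) := (dist_eq_norm _ _).symm
        _ ≤ dist (Φ p.1) d + dist d (Φ p.2) := dist_triangle _ _ _
        _ < c/4 + c/4 := by rw [dist_comm d]; linarith
        _ = c/2 := by ring
    linarith
  -- Step 3: combine
  have hsubset : {x | ¬ g x = ξ}
      ⊆ {x | g x < ξ} ∪ ⋃ n : ℕ, {x | ξ + 1/(n+1) ≤ g x} := by
    intro x hx
    rcases lt_or_gt_of_ne hx with hlt | hgt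
    · exact Or.inl hlt
    · obtain ⟨n, hn⟩ := exists_nat_one_div_lt (by linarith : (0:ℝ) < g x - ξ)
      exact Or.inr (Set.mem_iUnion.2 ⟨n, by simp only [Set.mem_setOf_eq]; linarith⟩)
  show ∀ᵐ x ∂μ1, g x = ξ
  rw [ae_iff]
  exact measure_mono_null hsubset
    (measure_union_null hlow
      (measure_iUnion_null fun n => hup (1/(n+1)) (by positivity)))
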